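/- The function h(γ) = (2γ²+4γ+1)/(2(1+γ)(γ²+2γ)) + 1 − (γ²+2γ)/ln(1+γ) is strictly decreasing on (0, ∞). -/

import Mathlib

/-- h(γ) = (2γ²+4γ+1)/(2(1+γ)(γ²+2γ)) + 1 − (γ²+2γ)/ln(1+γ). -/
noncomputable def hfun (γ : ℝ) : ℝ :=
  (2 * γ ^ 2 + 4 * γ + 1) / (2 * (1 + γ) * (γ ^ 2 + 2 * γ)) + 1 -
    (γ ^ 2 + 2 * γ) / Real.log (1 + γ)

lemma log_gt {x : ℝ} (hx : 0 < x) : x / (1 + x) < Real.log (1 + x) := by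
  have h1 : (0:ℝ) < 1 + x := by linarith
  have h2 : (1:ℝ)/(1+x) ≠ 1 := by
    intro h
    rw [div_eq_one_iff_eq (by linarith)] at h
    linarith
  have := Real.log_lt_sub_one_of_pos (x := 1/(1+x)) (by positivity) h2
  rw [Real.log_div one_ne_zero (by linarith), Real.log_one] at this
  have : Real.log (1+x) > 1 - 1/(1+x) := by linarith
  have he : 1 - 1/(1+x) = x/(1+x) := by field_simp; ring
  linarith [he ▸ this]

noncomputable def Bfun (t : ℝ) : ℝ := (t^2 + 2*t) / Real.log (1 + t)

lemma Bderiv {x : ℝ} (hx : 0 < x) :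
    HasDerivAt Bfun
      (((2*x+2) * Real.log (1+x) - (x^2+2*x) * (1/(1+x))) / (Real.log (1+x))^2) x := by
  have h1 : (0:ℝ) < 1 + x := by linarith
  have hL : 0 < Real.log (1+x) := Real.log_pos (by linarith)
  have hu : HasDerivAt (fun t : ℝ => t^2 + 2*t) (2*x+2) x := by
    have := ((hasDerivAt_pow 2 x).add ((hasDerivAt_id x).const_mul 2))
    exact this.congr_deriv (by rw [show (2:ℕ)-1 = 1 from rfl]; push_cast; ring)
  have hv : HasDerivAt (fun t : ℝ => Real.log (1+t)) (1/(1+x)) x := by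
    have h : HasDerivAt (fun t : ℝ => 1 + t) 1 x := (hasDerivAt_id x).const_add 1
    simpa [one_div] using h.log (by linarith)
  have := hu.div hv hL.ne'
  exact this

lemma Bmono : StrictMonoOn Bfun (Set.Ioi (0:ℝ)) := by
  apply strictMonoOn_of_deriv_pos (convex_Ioi 0)
  · intro x hx
    exact ((Bderiv hx).continuousAt).continuousWithinAt
  · intro x hx
    rw [interior_Ioi] at hx
    have hx : (0:ℝ) < x := hx
    rw [(Bderiv hx).deriv]
    have h1 : (0:ℝ) < 1 + x := by linarith
    have hL : 0 < Real.log (1+x) := Real.log_pos (by linarith)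
    have hlb := log_gt hx
    apply div_pos _ (by positivity)
    have e1 : (2*x+2) * (x/(1+x)) = 2*x := by field_simp; ring
    have e2 : (x^2+2*x) * (1/(1+x)) < 2*x := by
      rw [mul_one_div, div_lt_iff₀ h1]; nlinarith
    nlinarith [mul_lt_mul_of_pos_left hlb (show (0:ℝ) < 2*x+2 by linarith)]

/-- h is strictly decreasing on (0, ∞). -/
theorem stmt_5 : StrictAntiOn hfun (Set.Ioi (0 : ℝ)) := by
  intro x hx y hy hxy
  have hx : (0:ℝ) < x := hx
  have hy : (0:ℝ) < y := hy
  have hB : Bfun x < Bfun y := Bmono (Set.mem_Ioi.2 hx) (Set.mem_Ioi.2 hy) hxy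
  have hDx : (0:ℝ) < 2 * (1 + x) * (x^2 + 2*x) := by positivity
  have hDy : (0:ℝ) < 2 * (1 + y) * (y^2 + 2*y) := by positivity
  have hA : (2*y^2+4*y+1) / (2*(1+y)*(y^2+2*y)) < (2*x^2+4*x+1) / (2*(1+x)*(x^2+2*x)) := by
    rw [div_lt_div_iff₀ hDy hDx]
    nlinarith [mul_pos (sub_pos.2 hxy)
      (show (0:ℝ) < 4*x^2*y^2 + 8*x*y*(x+y) + 16*x*y + 2*(x^2+x*y+y^2) + 6*(x+y) + 4 by positivity)]
  simp only [hfun, Bfun] at *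
  linarith
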